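/- (Proposition 3: convergence of stochastic proximal-gradient variational inference with fixed step size and batch size.) Let E be a finite-dimensional real inner product space with its Borel σ-algebra, S ⊆ E convex, and (Ω, P) a probability space. Let f : E → ℝ be differentiable with L-Lipschitz gradient (L > 0), h : E → ℝ convex on S, α > 0, c > 1/(2α), α* := α − 1/(2c), σ ≥ 0, M > 0, t ≥ 1, and set β := α*/L. Let λ₀ ∈ S be fixed, and let λ₁, …, λ_t : Ω → E and g₀, …, g_{t−1} : Ω → E be measurable maps such that for P-almost every ω and every k < t: λ_{k+1}(ω) ∈ S minimizes λ ↦ ⟨λ, g_k(ω)⟩ + h(λ) + (1/β)·D(λ, λ_k(ω)) over S, h is differentiable at λ_{k+1}(ω), the map λ ↦ D(λ, λ_k(ω)) is differentiable at λ_{k+1}(ω), and ⟨λ_{k+1}(ω) − λ_k(ω), ∇₁D(λ_{k+1}(ω), λ_k(ω))⟩ ≥ α·‖λ_{k+1}(ω) − λ_k(ω)‖². Set δ_k := g_k − ∇f(λ_k) and G_k := (λ_k − λ_{k+1})/β, and assume ‖δ_k‖² and ‖G_k‖² are integrable with E[‖δ_k‖²] ≤ σ²/M for every k < t. Suppose 𝓛*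 ∈ ℝ satisfies −(f(λ) + h(λ)) ≤ 𝓛* for all λ ∈ S, and set C₀ := 𝓛* + f(λ₀) + h(λ₀). Then (1/t)·Σ_{k=0}^{t−1} E[‖G_k‖²] ≤ 2·L·C₀/(α*²·t) + c·σ²/(M·α*). -/

import Mathlib

open scoped RealInnerProductSpace
open MeasureTheory

section Aux

variable {E : Type*} [NormedAddCommGroup E] [InnerProductSpace ℝ E] [CompleteSpace E]

lemma line_hasDerivAt (f : E → ℝ) (x v : E) (s : ℝ) (hf : DifferentiableAt ℝ f (x + s • v)) :
    HasDerivAt (fun r : ℝ => f (x + r • v)) ⟪gradient f (x + s • v), v⟫ s := by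
  have hline : HasDerivAt (fun r : ℝ => x + r • v) v s := by
    simpa using ((hasDerivAt_id s).smul_const v).const_add x
  have hF : HasFDerivAt f (InnerProductSpace.toDual ℝ E (gradient f (x + s • v))) (x + s • v) :=
    hasGradientAt_iff_hasFDerivAt.mp hf.hasGradientAt
  simpa [InnerProductSpace.toDual_apply_apply, Function.comp_def] using hF.comp_hasDerivAt s hline

lemma descent_lemma {f : E → ℝ} {L : ℝ} (hL : 0 ≤ L) (hf : Differentiable ℝ f)
    (hlip : ∀ x y : E, ‖gradient f x - gradient f y‖ ≤ L * ‖x - y‖)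
    (x y : E) :
    f y ≤ f x + ⟪gradient f x, y - x⟫ + L / 2 * ‖y - x‖ ^ 2 := by
  set v := y - x with hv
  set φ : ℝ → ℝ := fun s => f (x + s • v) - s * ⟪gradient f x, v⟫ - L / 2 * s ^ 2 * ‖v‖ ^ 2
    with hφ
  have hder : ∀ s : ℝ, HasDerivAt φ
      (⟪gradient f (x + s • v), v⟫ - ⟪gradient f x, v⟫ - L * s * ‖v‖ ^ 2) s := by
    intro s
    have h1 : HasDerivAt (fun r : ℝ => f (x + r • v)) ⟪gradient f (x + s • v), v⟫ s :=
      line_hasDerivAt f x v s (hf _)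
    have h2 : HasDerivAt (fun r : ℝ => r * ⟪gradient f x, v⟫) ⟪gradient f x, v⟫ s := by
      simpa using (hasDerivAt_id s).mul_const (⟪gradient f x, v⟫)
    have h3 : HasDerivAt (fun r : ℝ => L / 2 * r ^ 2 * ‖v‖ ^ 2) (L * s * ‖v‖ ^ 2) s := by
      have h4 := ((hasDerivAt_pow 2 s).const_mul (L / 2)).mul_const (‖v‖ ^ 2)
      exact h4.congr_deriv (by ring)
    exact (h1.sub h2).sub h3
  have hanti : AntitoneOn φ (Set.Icc 0 1) := by
    apply antitoneOn_of_deriv_nonpos (convex_Icc 0 1)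
    · exact fun s _ => ((hder s).continuousAt).continuousWithinAt
    · exact fun s _ => ((hder s).differentiableAt).differentiableWithinAt
    · intro s hs
      rw [interior_Icc] at hs
      rw [(hder s).deriv]
      have h4 := real_inner_le_norm (gradient f (x + s • v) - gradient f x) v
      have h5 : ‖gradient f (x + s • v) - gradient f x‖ ≤ L * ‖x + s • v - x‖ := hlip _ _
      have h6 : ‖x + s • v - x‖ = s * ‖v‖ := by
        simp [norm_smul, abs_of_pos hs.1]
      rw [inner_sub_left] at h4
      rw [h6] at h5
      nlinarith [norm_nonneg v, norm_nonneg (gradient f (x + s • v) - gradient f x), hs.1.le]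
  have h01 := hanti (Set.left_mem_Icc.mpr zero_le_one) (Set.right_mem_Icc.mpr zero_le_one)
    zero_le_one
  have e1 : x + (1 : ℝ) • v = y := by rw [one_smul, hv]; abel
  have e0 : x + (0 : ℝ) • v = x := by simp
  simp only [hφ, e1, e0] at h01
  nlinarith [h01]

lemma opt_dir {S : Set E} (hS : Convex ℝ S) {h : E → ℝ} (hconv : ConvexOn ℝ S h)
    {Dq : E → ℝ} {β : ℝ} (hβ : 0 < β) {p q : E} (hp : p ∈ S) (hq : q ∈ S)
    {gv : E}
    (hmin : ∀ y ∈ S, ⟪p, gv⟫ + h p + (1 / β) * Dq p ≤ ⟪y, gv⟫ + h y + (1 / β) * Dq y)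
    (hdiff : DifferentiableAt ℝ Dq p) :
    h p - h q - ⟪gv, q - p⟫ ≤ (1 / β) * ⟪gradient Dq p, q - p⟫ := by
  set v := q - p with hv
  have hder : HasDerivAt (fun s : ℝ => Dq (p + s • v)) ⟪gradient Dq p, v⟫ 0 := by
    have h1 := line_hasDerivAt Dq p v 0 (by simpa using hdiff)
    simpa using h1
  have hslope : Filter.Tendsto (fun s : ℝ => (1 / β) * ((Dq (p + s • v) - Dq p) / s))
      (nhdsWithin 0 (Set.Ioi 0)) (nhds ((1 / β) * ⟪gradient Dq p, v⟫)) := by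
    have h1 := hasDerivAt_iff_tendsto_slope.mp hder
    have h2 : Filter.Tendsto (slope (fun s : ℝ => Dq (p + s • v)) 0)
        (nhdsWithin 0 (Set.Ioi 0)) (nhds ⟪gradient Dq p, v⟫) :=
      h1.mono_left (nhdsWithin_mono 0 (fun s hs => ne_of_gt hs))
    have h3 : (fun s : ℝ => (1 / β) * ((Dq (p + s • v) - Dq p) / s)) =
        fun s => (1 / β) * slope (fun s : ℝ => Dq (p + s • v)) 0 s := by
      funext s
      simp [slope_def_field]
    rw [h3]
    exact h2.const_mul _
  have hev : ∀ᶠ s in nhdsWithin (0 : ℝ) (Set.Ioi 0),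
      h p - h q - ⟪gv, v⟫ ≤ (1 / β) * ((Dq (p + s • v) - Dq p) / s) := by
    filter_upwards [Ioo_mem_nhdsGT_of_mem (Set.left_mem_Ico.mpr one_pos)] with s hs
    obtain ⟨hs0, hs1⟩ := hs
    have hconvpt : (1 - s) • p + s • q = p + s • v := by
      rw [hv]; module
    have hys : p + s • v ∈ S := by
      rw [← hconvpt]
      exact hS hp hq (by linarith) hs0.le (by ring)
    have hmin' := hmin _ hys
    have hh : h (p + s • v) ≤ (1 - s) * h p + s * h q := by
      have h4 := hconv.2 hp hq (by linarith : (0:ℝ) ≤ 1 - s) hs0.le (by ring)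
      rw [hconvpt] at h4
      simpa using h4
    have hinner : ⟪p + s • v, gv⟫ = ⟪p, gv⟫ + s * ⟪v, gv⟫ := by
      rw [inner_add_left, real_inner_smul_left]
    rw [hinner] at hmin'
    have key : s * (h p - h q - ⟪gv, v⟫) ≤ (1 / β) * (Dq (p + s • v) - Dq p) := by
      rw [real_inner_comm v gv]
      nlinarith [hmin', hh]
    rw [show (1 / β) * ((Dq (p + s • v) - Dq p) / s)
        = ((1 / β) * (Dq (p + s • v) - Dq p)) / s from by ring,
      le_div_iff₀ hs0]
    linarith [key]
  exact ge_of_tendsto hslope hev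

lemma step_ineq {S : Set E} (hS : Convex ℝ S) {h : E → ℝ} (hconv : ConvexOn ℝ S h)
    {f : E → ℝ} {L : ℝ} (hL : 0 < L) (hf : Differentiable ℝ f)
    (hlip : ∀ x y : E, ‖gradient f x - gradient f y‖ ≤ L * ‖x - y‖)
    {α c αs β : ℝ} (hα : 0 < α) (hc : 1 / (2 * α) < c)
    (hαs : αs = α - 1 / (2 * c)) (hβ : β = αs / L)
    {p q : E} (hp : p ∈ S) (hq : q ∈ S) {gv : E} {Dq : E → ℝ}
    (hmin : ∀ y ∈ S, ⟪p, gv⟫ + h p + (1 / β) * Dq p ≤ ⟪y, gv⟫ + h y + (1 / β) * Dq y)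
    (hdiff : DifferentiableAt ℝ Dq p)
    (hcurv : ⟪p - q, gradient Dq p⟫ ≥ α * ‖p - q‖ ^ 2) :
    L / 2 * ‖p - q‖ ^ 2 ≤ (f q + h q) - (f p + h p)
      + (β * c / 2) * ‖gv - gradient f q‖ ^ 2 := by
  have hc0 : 0 < c := lt_trans (by positivity) hc
  have h2ac : 1 < 2 * α * c := by
    rw [div_lt_iff₀ (by positivity)] at hc
    nlinarith
  have hαs0 : 0 < αs := by
    rw [hαs, sub_pos, div_lt_iff₀ (by positivity)]
    nlinarith
  have hβ0 : 0 < β := by rw [hβ]; positivity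
  have h1 := opt_dir hS hconv hβ0 hp hq hmin hdiff
  have h2 := descent_lemma hL.le hf hlip q p
  have h3 : ⟪gradient Dq p, q - p⟫ ≤ -(α * ‖p - q‖ ^ 2) := by
    have e1 : ⟪gradient Dq p, q - p⟫ = -⟪p - q, gradient Dq p⟫ := by
      rw [← neg_sub p q, inner_neg_right, real_inner_comm]
    rw [e1]
    linarith [hcurv]
  have h4 : h p - h q - ⟪gv, q - p⟫ ≤ -(α / β * ‖p - q‖ ^ 2) := by
    refine h1.trans ?_
    calc (1 / β) * ⟪gradient Dq p, q - p⟫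
        ≤ (1 / β) * (-(α * ‖p - q‖ ^ 2)) :=
          mul_le_mul_of_nonneg_left h3 (by positivity)
      _ = -(α / β * ‖p - q‖ ^ 2) := by ring
  set δn := ‖gv - gradient f q‖ with hδn
  set Δn := ‖p - q‖ with hΔn
  have h5 : -⟪gv - gradient f q, p - q⟫ ≤ δn * Δn := by
    have h6 := real_inner_le_norm (gradient f q - gv) (p - q)
    have e : ⟪gradient f q - gv, p - q⟫ = -⟪gv - gradient f q, p - q⟫ := by
      rw [← inner_neg_left, neg_sub]
    have eδ : ‖gradient f q - gv‖ = δn := by rw [hδn, norm_sub_rev]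
    rw [e, eδ] at h6
    exact h6
  have hbc : 0 < β * c := mul_pos hβ0 hc0
  have h6 : δn * Δn ≤ β * c / 2 * δn ^ 2 + 1 / (2 * (β * c)) * Δn ^ 2 := by
    rw [← sub_nonneg]
    have key : 0 ≤ (1 / (2 * (β * c))) * (β * c * δn - Δn) ^ 2 := by positivity
    have e : (1 / (2 * (β * c))) * (β * c * δn - Δn) ^ 2
        = β * c / 2 * δn ^ 2 + 1 / (2 * (β * c)) * Δn ^ 2 - δn * Δn := by
      field_simp
      ring
    rw [e] at key
    exact key
  -- rewrite inner products consistently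
  have e2 : ⟪gv, q - p⟫ = -⟪gv, p - q⟫ := by
    rw [← neg_sub p q, inner_neg_right]
  rw [e2] at h4
  have e3 : ⟪gv - gradient f q, p - q⟫ = ⟪gv, p - q⟫ - ⟪gradient f q, p - q⟫ := by
    rw [inner_sub_left]
  rw [e3] at h5
  -- coefficient identity
  have hco : (α / β - 1 / (2 * (β * c))) * Δn ^ 2 = L * Δn ^ 2 := by
    have h9 : α / β - 1 / (2 * (β * c)) = L := by
      have hβL : αs = β * L := by rw [hβ]; field_simp
      have hac : α = αs + 1 / (2 * c) := by rw [hαs]; ring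
      rw [hac, hβL]
      field_simp [hβ0.ne', hc0.ne']
      ring
    rw [h9]
  nlinarith [h2, h4, h5, h6, hco]

end Aux

/-- Proposition 3: convergence of stochastic proximal-gradient variational inference
with fixed step size `β := α*/L` (where `α* := α − 1/(2c)`) and fixed batch size `M`:
`(1/t)·Σ_{k<t} E[‖G_k‖²] ≤ 2LC₀/(α*²t) + cσ²/(Mα*)`, where
`G_k := (λ_k − λ_{k+1})/β`, `δ_k := g_k − ∇f(λ_k)` with `E[‖δ_k‖²] ≤ σ²/M`,
and `C₀ := 𝓛* + f(λ₀) + h(λ₀)`. -/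
theorem stmt_6 {E : Type*} [NormedAddCommGroup E] [InnerProductSpace ℝ E]
    [FiniteDimensional ℝ E] [MeasurableSpace E] [BorelSpace E]
    {Ω : Type*} [MeasurableSpace Ω] (P : Measure Ω) [IsProbabilityMeasure P]
    (S : Set E) (hS : Convex ℝ S)
    (h : E → ℝ) (D : E → E → ℝ)
    (f : E → ℝ) (L : ℝ) (hL : 0 < L)
    (hf : Differentiable ℝ f)
    (hlip : ∀ x y : E, ‖gradient f x - gradient f y‖ ≤ L * ‖x - y‖)
    (hconv : ConvexOn ℝ S h)
    (α c σ M : ℝ) (hα : 0 < α) (hc : 1 / (2 * α) < c) (hσ : 0 ≤ σ) (hM : 0 < M)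
    (t : ℕ) (ht : 1 ≤ t)
    (αs : ℝ) (hαs : αs = α - 1 / (2 * c))
    (β : ℝ) (hβ : β = αs / L)
    (lam0 : E) (hlam0S : lam0 ∈ S)
    (lam : ℕ → Ω → E) (g : ℕ → Ω → E)
    (hlam0 : ∀ ω, lam 0 ω = lam0)
    (hmeas_lam : ∀ k, Measurable (lam k))
    (hmeas_g : ∀ k < t, Measurable (g k))
    (hae : ∀ᵐ ω ∂P, ∀ k < t,
      lam (k + 1) ω ∈ S ∧
      (∀ y ∈ S,
        ⟪lam (k + 1) ω, g k ω⟫ + h (lam (k + 1) ω) +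
            (1 / β) * D (lam (k + 1) ω) (lam k ω) ≤
          ⟪y, g k ω⟫ + h y + (1 / β) * D y (lam k ω)) ∧
      DifferentiableAt ℝ h (lam (k + 1) ω) ∧
      DifferentiableAt ℝ (fun x => D x (lam k ω)) (lam (k + 1) ω) ∧
      ⟪lam (k + 1) ω - lam k ω, gradient (fun x => D x (lam k ω)) (lam (k + 1) ω)⟫ ≥
        α * ‖lam (k + 1) ω - lam k ω‖ ^ 2)
    (hδint : ∀ k < t, Integrable (fun ω => ‖g k ω - gradient f (lam k ω)‖ ^ 2) P)
    (hGint : ∀ k < t,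
      Integrable (fun ω => ‖(1 / β) • (lam k ω - lam (k + 1) ω)‖ ^ 2) P)
    (hδvar : ∀ k < t, ∫ ω, ‖g k ω - gradient f (lam k ω)‖ ^ 2 ∂P ≤ σ ^ 2 / M)
    (Lstar : ℝ) (hLstar : ∀ x ∈ S, -(f x + h x) ≤ Lstar) :
    (1 / (t : ℝ)) * ∑ k ∈ Finset.range t,
        (∫ ω, ‖(1 / β) • (lam k ω - lam (k + 1) ω)‖ ^ 2 ∂P) ≤
      2 * L * (Lstar + f lam0 + h lam0) / (αs ^ 2 * t) + c * σ ^ 2 / (M * αs) := by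
  have hc0 : 0 < c := lt_trans (by positivity) hc
  have h2ac : 1 < 2 * α * c := by
    rw [div_lt_iff₀ (by positivity)] at hc
    nlinarith
  have hαs0 : 0 < αs := by
    rw [hαs, sub_pos, div_lt_iff₀ (by positivity)]
    nlinarith
  have hβ0 : 0 < β := by rw [hβ]; positivity
  have ht0 : (0 : ℝ) < t := by exact_mod_cast Nat.pos_of_ne_zero (by omega)
  set C0 := Lstar + f lam0 + h lam0 with hC0
  -- pointwise a.e. inequality
  have hpt : ∀ᵐ ω ∂P, (L * β ^ 2 / 2) *
      ∑ k ∈ Finset.range t, ‖(1 / β) • (lam k ω - lam (k + 1) ω)‖ ^ 2 ≤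
      C0 + (β * c / 2) * ∑ k ∈ Finset.range t, ‖g k ω - gradient f (lam k ω)‖ ^ 2 := by
    filter_upwards [hae] with ω hω
    have hmem : ∀ k, k ≤ t → lam k ω ∈ S := by
      intro k hk
      cases k with
      | zero => rw [hlam0]; exact hlam0S
      | succ n => exact (hω n (by omega)).1
    set F : ℕ → ℝ := fun k => f (lam k ω) + h (lam k ω) with hF
    have hstep : ∀ k ∈ Finset.range t,
        L / 2 * ‖lam (k + 1) ω - lam k ω‖ ^ 2 ≤
          (F k - F (k + 1)) + (β * c / 2) * ‖g k ω - gradient f (lam k ω)‖ ^ 2 := by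
      intro k hk
      rw [Finset.mem_range] at hk
      obtain ⟨hpS, hmin, hdh, hdD, hcurv⟩ := hω k hk
      have h1 := step_ineq hS hconv hL hf hlip hα hc hαs hβ hpS (hmem k hk.le) hmin hdD hcurv
      simpa [hF] using h1
    have hsum := Finset.sum_le_sum hstep
    have e1 : (L * β ^ 2 / 2) * ∑ k ∈ Finset.range t,
        ‖(1 / β) • (lam k ω - lam (k + 1) ω)‖ ^ 2 =
        ∑ k ∈ Finset.range t, L / 2 * ‖lam (k + 1) ω - lam k ω‖ ^ 2 := by
      rw [Finset.mul_sum]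
      apply Finset.sum_congr rfl
      intro k _
      rw [norm_smul, norm_sub_rev]
      rw [Real.norm_eq_abs, abs_of_pos (by positivity : (0:ℝ) < 1 / β)]
      field_simp
    have e2 : ∑ k ∈ Finset.range t,
        ((F k - F (k + 1)) + (β * c / 2) * ‖g k ω - gradient f (lam k ω)‖ ^ 2) =
        (F 0 - F t) + (β * c / 2) *
          ∑ k ∈ Finset.range t, ‖g k ω - gradient f (lam k ω)‖ ^ 2 := by
      rw [Finset.sum_add_distrib, Finset.sum_range_sub' F, ← Finset.mul_sum]
    have e3 : F 0 - F t ≤ C0 := by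
      have h2 := hLstar _ (hmem t le_rfl)
      have e4 : F 0 = f lam0 + h lam0 := by rw [hF]; simp [hlam0]
      rw [hC0]
      simp only [hF] at *
      linarith
    rw [e1]
    calc ∑ k ∈ Finset.range t, L / 2 * ‖lam (k + 1) ω - lam k ω‖ ^ 2
        ≤ ∑ k ∈ Finset.range t,
          ((F k - F (k + 1)) + (β * c / 2) * ‖g k ω - gradient f (lam k ω)‖ ^ 2) := hsum
      _ = (F 0 - F t) + (β * c / 2) *
          ∑ k ∈ Finset.range t, ‖g k ω - gradient f (lam k ω)‖ ^ 2 := e2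
      _ ≤ C0 + (β * c / 2) *
          ∑ k ∈ Finset.range t, ‖g k ω - gradient f (lam k ω)‖ ^ 2 := add_le_add_left e3 _
  -- integrate
  have hIG : Integrable (fun ω => (L * β ^ 2 / 2) *
      ∑ k ∈ Finset.range t, ‖(1 / β) • (lam k ω - lam (k + 1) ω)‖ ^ 2) P :=
    (integrable_finset_sum _ (fun k hk => hGint k (Finset.mem_range.mp hk))).const_mul _
  have hIδs : Integrable (fun ω =>
      ∑ k ∈ Finset.range t, ‖g k ω - gradient f (lam k ω)‖ ^ 2) P :=
    integrable_finset_sum _ (fun k hk => hδint k (Finset.mem_range.mp hk))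
  have hIδ : Integrable (fun ω => C0 + (β * c / 2) *
      ∑ k ∈ Finset.range t, ‖g k ω - gradient f (lam k ω)‖ ^ 2) P :=
    (integrable_const C0).add (hIδs.const_mul _)
  have hint := integral_mono_ae hIG hIδ hpt
  rw [integral_const_mul, integral_add (integrable_const C0) (hIδs.const_mul _),
    integral_const_mul, integral_const] at hint
  simp only [measure_univ, probReal_univ, ENNReal.toReal_one, smul_eq_mul, one_mul] at hint
  rw [integral_finset_sum _ (fun k hk => hGint k (Finset.mem_range.mp hk)),
    integral_finset_sum _ (fun k hk => hδint k (Finset.mem_range.mp hk))] at hint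
  -- bound the noise sum
  have hδsum : ∑ k ∈ Finset.range t, ∫ ω, ‖g k ω - gradient f (lam k ω)‖ ^ 2 ∂P ≤
      t * (σ ^ 2 / M) := by
    calc ∑ k ∈ Finset.range t, ∫ ω, ‖g k ω - gradient f (lam k ω)‖ ^ 2 ∂P
        ≤ ∑ _k ∈ Finset.range t, σ ^ 2 / M :=
          Finset.sum_le_sum (fun k hk => hδvar k (Finset.mem_range.mp hk))
      _ = t * (σ ^ 2 / M) := by
          rw [Finset.sum_const, Finset.card_range, nsmul_eq_mul]
  set A := ∑ k ∈ Finset.range t, ∫ ω, ‖(1 / β) • (lam k ω - lam (k + 1) ω)‖ ^ 2 ∂P with hA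
  have hkey : (L * β ^ 2 / 2) * A ≤ C0 + (β * c / 2) * (t * (σ ^ 2 / M)) := by
    have h1 : (β * c / 2) * ∑ k ∈ Finset.range t,
        ∫ ω, ‖g k ω - gradient f (lam k ω)‖ ^ 2 ∂P ≤ (β * c / 2) * (t * (σ ^ 2 / M)) :=
      mul_le_mul_of_nonneg_left hδsum (by positivity)
    linarith [hint]
  have htB : A ≤ t * (2 * L * C0 / (αs ^ 2 * t) + c * σ ^ 2 / (M * αs)) := by
    have h9 : (t : ℝ) * (2 * L * C0 / (αs ^ 2 * t) + c * σ ^ 2 / (M * αs)) =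
        (C0 + (β * c / 2) * (t * (σ ^ 2 / M))) / (L * β ^ 2 / 2) := by
      rw [hβ]
      field_simp
    rw [h9, le_div_iff₀ (by positivity)]
    nlinarith [hkey]
  calc (1 / (t : ℝ)) * A
      ≤ (1 / (t : ℝ)) * ((t : ℝ) * (2 * L * C0 / (αs ^ 2 * t) + c * σ ^ 2 / (M * αs))) :=
        mul_le_mul_of_nonneg_left htB (by positivity)
    _ = 2 * L * C0 / (αs ^ 2 * t) + c * σ ^ 2 / (M * αs) := by
        field_simp
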